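/- For the 5-periodic pentagon recurrence X_k X_{k+2} = 1 + X_{k+1} (indices mod 5), the cyclic sum over k in Z/5Z of (1 + X_{k+1}) wedge X_{k+1} vanishes in the exterior square of the multiplicative group: sum_k (1+X_k) wedge X_k = 0 in Lambda^2(F^*) tensor Q. -/
import Mathlib

/-- For the 5-periodic pentagon recurrence `X_k X_{k+2} = 1 + X_{k+1}` the
cyclic sum `∑_k (1+X_k) ∧ X_k` vanishes in `Λ²(F^×)⊗ℚ`, modeled universally
by an alternating bimultiplicative map `w` into a `ℚ`-vector space. -/
theorem stmt_4 {F : Type*} [Field F] {M : Type*} [AddCommGroup M] [Module ℚ M]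
    (w : F → F → M)
    (hmul₁ : ∀ a b c : F, a ≠ 0 → b ≠ 0 → c ≠ 0 → w (a * b) c = w a c + w b c)
    (hmul₂ : ∀ a b c : F, a ≠ 0 → b ≠ 0 → c ≠ 0 → w a (b * c) = w a b + w a c)
    (halt : ∀ a b : F, w a b = - w b a)
    (X : ZMod 5 → F) (hX0 : ∀ k, X k ≠ 0) (hX1 : ∀ k, 1 + X k ≠ 0)
    (hrec : ∀ k, X k * X (k + 2) = 1 + X (k + 1)) :
    ∑ k : ZMod 5, w (1 + X k) (X k) = 0 := by
  have key : ∀ k, w (1 + X k) (X k) = w (X (k-1)) (X k) - w (X k) (X (k+1)) := by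
    intro k
    have h := hrec (k-1)
    rw [show k-1+1 = k from by ring, show k-1+2 = k+1 from by ring] at h
    rw [← h, hmul₁ _ _ _ (hX0 _) (hX0 _) (hX0 _), halt (X (k+1)) (X k)]
    abel
  simp_rw [key]
  rw [Finset.sum_sub_distrib, sub_eq_zero]
  refine Fintype.sum_equiv (Equiv.subRight 1) _ _ (fun k => ?_)
  show w (X (k - 1)) (X k) = w (X (k-1)) (X (k-1+1))
  rw [show k-1+1 = k from by ring]
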